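/- arXiv:2512.17238 — 2 statements merged into one kernel-verified Lean document; each statement's English description precedes it below -/
import Mathlib

section
/- Let X1,...,Xn be i.i.d. random variables drawn from a non-atomic continuous distribution on [0,1] with n ≥ 2. Then for any distinct indices i, i', the conditional expectation E[Xi | Xi is the unique minimum among X1,...,Xn] is strictly less than E[Xi | Xi' is the unique minimum among X1,...,Xn]. -/
open MeasureTheory ProbabilityTheory

section Aux

variable {n : ℕ} {D : Measure ℝ} [IsProbabilityMeasure D]

/-- The event (in the product space) that coordinate `k` is the strict minimum. -/
def minSet (n : ℕ) (k : Fin n) : Set (Fin n → ℝ) := {x | ∀ j, j ≠ k → x k < x j}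

lemma minSet_measurable (k : Fin n) : MeasurableSet (minSet n k) := by
  have : minSet n k = ⋂ j, ⋂ (_ : j ≠ k), {x : Fin n → ℝ | x k < x j} := by
    ext x; simp [minSet]
  rw [this]
  exact MeasurableSet.iInter fun j => MeasurableSet.iInter fun _ =>
    measurableSet_lt (measurable_pi_apply k) (measurable_pi_apply j)

/-- Precomposition with a permutation preserves the i.i.d. product measure. -/
lemma measurePreserving_comp_equiv (e : Fin n ≃ Fin n) :
    MeasurePreserving (fun x : Fin n → ℝ => x ∘ e)
      (Measure.pi fun _ => D) (Measure.pi fun _ => D) := by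
  have hmeas : Measurable (fun x : Fin n → ℝ => x ∘ e) :=
    measurable_pi_lambda _ fun j => measurable_pi_apply (e j)
  refine ⟨hmeas, ?_⟩
  refine (Measure.pi_eq fun s hs => ?_).symm
  rw [Measure.map_apply hmeas (MeasurableSet.univ_pi hs)]
  have hpre : (fun x : Fin n → ℝ => x ∘ e) ⁻¹' Set.pi Set.univ s
      = Set.pi Set.univ (fun j => s (e.symm j)) := by
    ext x
    simp only [Set.mem_preimage, Set.mem_pi, Set.mem_univ, forall_true_left, Function.comp]
    constructor
    · intro h j; have := h (e.symm j); simpa using this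
    · intro h j; have := h (e j); simpa using this
  rw [hpre, Measure.pi_pi]
  exact Fintype.prod_equiv e.symm _ _ fun j => rfl

end Aux

/-- Lemma "Disutility-Gap": for i.i.d. draws from a non-atomic distribution on `[0,1]`,
the conditional expectation of `X i` given that `X i` is the unique minimum is strictly
smaller than its conditional expectation given that `X i'` is the unique minimum. -/
theorem disutility_gap
    {Ω : Type*} [MeasurableSpace Ω] (μ : Measure Ω) [IsProbabilityMeasure μ]
    (n : ℕ) (hn : 2 ≤ n) (X : Fin n → Ω → ℝ) (D : Measure ℝ) [IsProbabilityMeasure D]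
    (hmeas : ∀ i, Measurable (X i))
    (hindep : iIndepFun X μ)
    (hdist : ∀ i, Measure.map (X i) μ = D)
    (hsupp : D (Set.Icc (0 : ℝ) 1) = 1)
    (hnonatomic : ∀ x : ℝ, D {x} = 0)
    (i i' : Fin n) (hii' : i ≠ i') :
    (∫ ω, X i ω ∂(μ[|{ω | ∀ j, j ≠ i → X i ω < X j ω}])) <
      (∫ ω, X i ω ∂(μ[|{ω | ∀ j, j ≠ i' → X i' ω < X j ω}])) := by
  classical
  set π : Measure (Fin n → ℝ) := Measure.pi (fun _ => D) with hπdef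
  haveI : IsProbabilityMeasure π := by
    constructor
    rw [hπdef, ← Set.pi_univ Set.univ, Measure.pi_pi]
    simp
  -- the joint random vector
  set T : Ω → (Fin n → ℝ) := fun ω j => X j ω with hTdef
  have hTmeas : Measurable T := measurable_pi_lambda _ fun j => hmeas j
  -- its law is the product measure
  have hmap : Measure.map T μ = π := by
    refine (Measure.pi_eq fun s hs => ?_).symm
    rw [Measure.map_apply hTmeas (MeasurableSet.univ_pi hs)]
    have hpre : T ⁻¹' Set.pi Set.univ s = ⋂ j ∈ Finset.univ, X j ⁻¹' s j := by
      ext ω; simp [hTdef, Set.mem_pi]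
    rw [hpre, hindep.measure_inter_preimage_eq_mul Finset.univ (fun j _ => hs j)]
    exact Finset.prod_congr rfl fun j _ => by
      rw [← hdist j, Measure.map_apply (hmeas j) (hs j)]
  -- symmetry of π under swapping coordinates
  have hswap : ∀ k k' : Fin n, π (minSet n k) = π (minSet n k') := by
    intro k k'
    have hmp := measurePreserving_comp_equiv (n := n) (D := D) (Equiv.swap k k')
    have hpre : (fun x : Fin n → ℝ => x ∘ Equiv.swap k k') ⁻¹' minSet n k' = minSet n k := by
      ext x
      simp only [Set.mem_preimage, minSet, Set.mem_setOf_eq, Function.comp]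
      constructor
      · intro h j hj
        have := h (Equiv.swap k k' j) (by
          intro hc
          exact hj (by simpa using congrArg (Equiv.swap k k') hc))
        simpa [Equiv.swap_apply_right, Equiv.swap_apply_self] using this
      · intro h j hj
        have := h (Equiv.swap k k' j) (by
          intro hc
          apply hj
          have := congrArg (Equiv.swap k k') hc
          simpa [Equiv.swap_apply_self, Equiv.swap_apply_left] using this)
        simpa [Equiv.swap_apply_right] using this
    calc π (minSet n k) = π ((fun x : Fin n → ℝ => x ∘ Equiv.swap k k') ⁻¹' minSet n k') := by
          rw [hpre]
      _ = π (minSet n k') := hmp.measure_preimage (minSet_measurable k').nullMeasurableSet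
  -- pairwise equality events are null
  have hties : ∀ j k : Fin n, j ≠ k → π {x | x j = x k} = 0 := by
    intro j k hjk
    have hmeasset : MeasurableSet {x : Fin n → ℝ | x j = x k} :=
      measurableSet_eq_fun (measurable_pi_apply j) (measurable_pi_apply k)
    have hTpre : T ⁻¹' {x | x j = x k} = {ω | X j ω = X k ω} := rfl
    have hpush : μ {ω | X j ω = X k ω} = 0 := by
      have hpair := (indepFun_iff_map_prod_eq_prod_map_map
        (hmeas j).aemeasurable (hmeas k).aemeasurable).mp (hindep.indepFun hjk)
      have hdiag : MeasurableSet {p : ℝ × ℝ | p.1 = p.2} :=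
        measurableSet_eq_fun measurable_fst measurable_snd
      have : {ω | X j ω = X k ω} = (fun ω => (X j ω, X k ω)) ⁻¹' {p : ℝ × ℝ | p.1 = p.2} := rfl
      rw [this, ← Measure.map_apply ((hmeas j).prodMk (hmeas k)) hdiag, hpair,
        hdist j, hdist k, Measure.prod_apply hdiag]
      have hfiber : ∀ a : ℝ, (Prod.mk a ⁻¹' {p : ℝ × ℝ | p.1 = p.2}) = {a} := by
        intro a; ext b; simp [eq_comm]
      simp only [hfiber, hnonatomic]
      simp
    rw [← hmap, Measure.map_apply hTmeas hmeasset, hTpre, hpush]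
  -- positivity of the minimum events
  have hpos : π (minSet n i) ≠ 0 := by
    intro h0
    have hz : ∀ k, π (minSet n k) = 0 := fun k => (hswap k i).trans h0
    have hUz : π (⋃ k, minSet n k) = 0 := measure_iUnion_null hz
    have hTz : π (⋃ j, ⋃ k, ⋃ (_ : j ≠ k), {x : Fin n → ℝ | x j = x k}) = 0 :=
      measure_iUnion_null fun j => measure_iUnion_null fun k => by
        by_cases h : j = k
        · subst h
          have he : (⋃ (_ : j ≠ j), {x : Fin n → ℝ | x j = x j}) = ∅ := by simp
          rw [he, measure_empty]
        · exact measure_mono_null (Set.iUnion_subset fun _ => subset_rfl) (hties j k h)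
    have hcover : (Set.univ : Set (Fin n → ℝ)) ⊆
        (⋃ j, ⋃ k, ⋃ (_ : j ≠ k), {x : Fin n → ℝ | x j = x k}) ∪ ⋃ k, minSet n k := by
      intro x _
      by_cases hd : ∃ j k, j ≠ k ∧ x j = x k
      · obtain ⟨j, k, hjk, hx⟩ := hd
        exact Or.inl (Set.mem_iUnion.2 ⟨j, Set.mem_iUnion.2 ⟨k, Set.mem_iUnion.2 ⟨hjk, hx⟩⟩⟩)
      · push_neg at hd
        haveI : Nonempty (Fin n) := ⟨⟨0, by omega⟩⟩
        obtain ⟨k, hk⟩ := Finite.exists_min x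
        refine Or.inr (Set.mem_iUnion.2 ⟨k, fun j hj => ?_⟩)
        exact lt_of_le_of_ne (hk j) (fun hc => (hd k j (Ne.symm hj)) hc)
    have h1 : (1 : ENNReal) ≤ 0 := by
      calc (1 : ENNReal) = π Set.univ := (measure_univ).symm
        _ ≤ π ((⋃ j, ⋃ k, ⋃ (_ : j ≠ k), {x : Fin n → ℝ | x j = x k}) ∪ ⋃ k, minSet n k) :=
            measure_mono hcover
        _ ≤ π (⋃ j, ⋃ k, ⋃ (_ : j ≠ k), {x : Fin n → ℝ | x j = x k}) + π (⋃ k, minSet n k) :=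
            measure_union_le _ _
        _ = 0 := by rw [hTz, hUz, add_zero]
    simp at h1
  -- almost surely all coordinates are in [0,1]
  have hbox : π (Set.pi Set.univ fun _ : Fin n => Set.Icc (0:ℝ) 1) = 1 := by
    rw [hπdef, Measure.pi_pi]; simp [hsupp]
  have hae : ∀ᵐ x ∂π, ∀ j, x j ∈ Set.Icc (0:ℝ) 1 := by
    have hms : MeasurableSet (Set.pi Set.univ fun _ : Fin n => Set.Icc (0:ℝ) 1) :=
      MeasurableSet.univ_pi fun _ => measurableSet_Icc
    have := measure_compl hms (measure_ne_top π _)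
    rw [hbox, measure_univ, tsub_self] at this
    refine (ae_iff).2 (measure_mono_null ?_ this)
    intro x hx
    simp only [Set.mem_compl_iff, Set.mem_pi, Set.mem_univ, forall_true_left]
    push_neg
    push_neg at hx
    exact hx
  -- integrability of coordinate functions on restricted measures
  have hint : ∀ (k j : Fin n), Integrable (fun x : Fin n → ℝ => x j)
      (π.restrict (minSet n k)) := by
    intro k j
    refine Integrable.mono' (integrable_const 1)
      ((measurable_pi_apply j).aestronglyMeasurable) ?_
    refine (ae_restrict_of_ae ?_)
    filter_upwards [hae] with x hx
    have := hx j
    rw [Set.mem_Icc] at this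
    rw [Real.norm_eq_abs, abs_le]
    constructor <;> linarith [this.1, this.2]
  -- rewrite the conditional integrals in terms of π
  have hcond : ∀ k : Fin n,
      (∫ ω, X i ω ∂(μ[|{ω | ∀ j, j ≠ k → X k ω < X j ω}])) =
        (π (minSet n k)).toReal⁻¹ * ∫ x in minSet n k, x i ∂π := by
    intro k
    have hEset : {ω | ∀ j, j ≠ k → X k ω < X j ω} = T ⁻¹' minSet n k := rfl
    have hμE : μ (T ⁻¹' minSet n k) = π (minSet n k) := by
      rw [← hmap, Measure.map_apply hTmeas (minSet_measurable k)]
    rw [hEset, ProbabilityTheory.cond, integral_smul_measure, hμE, ENNReal.toReal_inv,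
      smul_eq_mul]
    congr 1
    have := setIntegral_map (μ := μ) (g := T) (f := fun x : Fin n → ℝ => x i)
      (minSet_measurable k) ((measurable_pi_apply i).aestronglyMeasurable)
      hTmeas.aemeasurable
    rw [hmap] at this
    exact this.symm
  rw [hcond i, hcond i']
  -- transport the integral over minSet i' to an integral over minSet i
  have hππ : π (minSet n i') = π (minSet n i) := hswap i' i
  have hswapint : (∫ x in minSet n i', x i ∂π) = ∫ x in minSet n i, x i' ∂π := by
    set e := Equiv.swap i i' with hedef
    set s : (Fin n → ℝ) → (Fin n → ℝ) := fun x => x ∘ e with hsdef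
    have hsmeas : Measurable s := measurable_pi_lambda _ fun j => measurable_pi_apply (e j)
    have hmp : MeasurePreserving s π π := measurePreserving_comp_equiv e
    have hemb : MeasurableEmbedding s := by
      have : Function.Involutive s := by
        intro x; funext j; simp [hsdef, Function.comp, hedef, Equiv.swap_apply_self]
      exact (MeasurableEquiv.mk (Equiv.mk s s this.leftInverse this.rightInverse)
        hsmeas hsmeas).measurableEmbedding
    have hpre : s ⁻¹' minSet n i' = minSet n i := by
      ext x
      simp only [Set.mem_preimage, minSet, Set.mem_setOf_eq, hsdef, Function.comp]
      constructor
      · intro h j hj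
        have := h (e j) (by
          intro hc
          exact hj (by simpa [hedef] using congrArg e hc))
        simpa [hedef, Equiv.swap_apply_right, Equiv.swap_apply_self] using this
      · intro h j hj
        have := h (e j) (by
          intro hc
          apply hj
          have := congrArg e hc
          simpa [hedef, Equiv.swap_apply_self, Equiv.swap_apply_left] using this)
        simpa [hedef, Equiv.swap_apply_right] using this
    have := hmp.setIntegral_preimage_emb hemb (fun x : Fin n → ℝ => x i) (minSet n i')
    rw [hpre] at this
    rw [← this]
    refine setIntegral_congr_fun (minSet_measurable i) fun x _ => ?_
    simp [hsdef, Function.comp, hedef, Equiv.swap_apply_left]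
  rw [hππ, hswapint]
  -- now a strict inequality on the set minSet i
  have hcpos : 0 < (π (minSet n i)).toReal⁻¹ := by
    refine inv_pos.2 (ENNReal.toReal_pos hpos (measure_ne_top _ _))
  refine mul_lt_mul_of_pos_left ?_ hcpos
  -- strict integral inequality
  have haei : ∀ᵐ x ∂(π.restrict (minSet n i)), x i < x i' := by
    filter_upwards [ae_restrict_mem (minSet_measurable i)] with x hx
    exact hx i' (Ne.symm hii')
  have hintsub : Integrable (fun x : Fin n → ℝ => x i' - x i) (π.restrict (minSet n i)) :=
    (hint i i').sub (hint i i)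
  have hnonneg : 0 ≤ᵐ[π.restrict (minSet n i)] fun x : Fin n → ℝ => x i' - x i := by
    filter_upwards [haei] with x hx
    show (0:ℝ) ≤ x i' - x i
    linarith
  have hne : ¬ ((fun x : Fin n → ℝ => x i' - x i) =ᵐ[π.restrict (minSet n i)] 0) := by
    intro hzero
    have hfalse : ∀ᵐ x ∂(π.restrict (minSet n i)), False := by
      filter_upwards [haei, hzero] with x hx hz
      simp only [Pi.zero_apply] at hz
      linarith
    have : π.restrict (minSet n i) Set.univ = 0 := by
      have := hfalse
      rw [ae_iff] at this
      simpa using this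
    rw [Measure.restrict_apply_univ] at this
    exact hpos this
  have hlt : 0 < ∫ x in minSet n i, (x i' - x i) ∂π := by
    rcases lt_or_eq_of_le (integral_nonneg_of_ae hnonneg) with h | h
    · exact h
    · exact absurd ((integral_eq_zero_iff_of_nonneg_ae hnonneg hintsub).mp h.symm) hne
  have := integral_sub (hint i i') (hint i i)
  rw [this] at hlt
  linarith
end

section
/- Let X1,...,Xn be i.i.d. random variables drawn from a non-atomic continuous distribution on [0,1] with n ≥ 2. Then for any distinct indices i, i', the conditional expectation E[Xi | Xi is the unique maximum among X1,...,Xn] is strictly greater than E[Xi | Xi' is the unique maximum among X1,...,Xn]. -/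
open MeasureTheory ProbabilityTheory

/-- Lemma "Utility-Gap": for i.i.d. draws from a non-atomic distribution on `[0,1]`,
the conditional expectation of `X i` given that `X i` is the unique maximum is strictly
greater than its conditional expectation given that `X i'` is the unique maximum. -/
theorem utility_gap
    {Ω : Type*} [MeasurableSpace Ω] (μ : Measure Ω) [IsProbabilityMeasure μ]
    (n : ℕ) (hn : 2 ≤ n) (X : Fin n → Ω → ℝ) (D : Measure ℝ) [IsProbabilityMeasure D]
    (hmeas : ∀ i, Measurable (X i))
    (hindep : iIndepFun X μ)
    (hdist : ∀ i, Measure.map (X i) μ = D)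
    (hsupp : D (Set.Icc (0 : ℝ) 1) = 1)
    (hnonatomic : ∀ x : ℝ, D {x} = 0)
    (i i' : Fin n) (hii' : i ≠ i') :
    (∫ ω, X i ω ∂(μ[|{ω | ∀ j, j ≠ i → X j ω < X i ω}])) >
      (∫ ω, X i ω ∂(μ[|{ω | ∀ j, j ≠ i' → X j ω < X i' ω}])) := by
  classical
  set J : Ω → (Fin n → ℝ) := fun ω j => X j ω with hJdef
  have hJmeas : Measurable J := measurable_pi_lambda _ hmeas
  set π : Measure (Fin n → ℝ) := Measure.pi (fun _ : Fin n => D) with hπdef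
  -- the joint law is the product measure
  have hmap : Measure.map J μ = π := by
    refine (Measure.pi_eq fun s hs => ?_).symm
    rw [Measure.map_apply hJmeas (MeasurableSet.univ_pi hs)]
    have hpre : J ⁻¹' Set.pi Set.univ s = ⋂ k ∈ Finset.univ, X k ⁻¹' s k := by
      ext ω; simp [J, Set.mem_pi]
    rw [hpre, hindep.measure_inter_preimage_eq_mul Finset.univ (fun k _ => hs k)]
    refine Finset.prod_congr rfl fun k _ => ?_
    rw [← hdist k, Measure.map_apply (hmeas k) (hs k)]
  -- the events
  set A : Fin n → Set Ω := fun k => {ω | ∀ j, j ≠ k → X j ω < X k ω} with hAdef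
  set A' : Fin n → Set (Fin n → ℝ) := fun k => {x | ∀ j, j ≠ k → x j < x k} with hA'def
  have hA'meas : ∀ k, MeasurableSet (A' k) := by
    intro k
    have : A' k = ⋂ j ∈ {j : Fin n | j ≠ k}, {x : Fin n → ℝ | x j < x k} := by
      ext x; simp [hA'def]
    rw [this]
    exact MeasurableSet.biInter (Set.to_countable _) fun j _ =>
      measurableSet_lt (measurable_pi_apply j) (measurable_pi_apply k)
  have hpreAJ : ∀ k, A k = J ⁻¹' A' k := fun k => rfl
  have hAmeas : ∀ k, MeasurableSet (A k) := fun k => hJmeas (hA'meas k)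
  have hμA : ∀ k, μ (A k) = π (A' k) := fun k => by
    rw [hpreAJ, ← hmap, Measure.map_apply hJmeas (hA'meas k)]
  -- permutation machinery
  have hMP : ∀ σ : Equiv.Perm (Fin n),
      MeasurePreserving (fun x : Fin n → ℝ => x ∘ σ) π π := by
    intro σ
    have h1 := measurePreserving_piCongrLeft (fun _ : Fin n => D) σ.symm
    have hfun : ⇑(MeasurableEquiv.piCongrLeft (fun _ : Fin n => ℝ) σ.symm)
        = fun x : Fin n → ℝ => x ∘ σ := by
      funext x; funext j
      have h2 := MeasurableEquiv.piCongrLeft_apply_apply σ.symm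
        (β := fun _ : Fin n => ℝ) x (σ j)
      simpa using h2
    rw [hfun] at h1
    exact h1
  have hEmb : ∀ σ : Equiv.Perm (Fin n),
      MeasurableEmbedding (fun x : Fin n → ℝ => x ∘ σ) := by
    intro σ
    have hfun : ⇑(MeasurableEquiv.piCongrLeft (fun _ : Fin n => ℝ) σ.symm)
        = fun x : Fin n → ℝ => x ∘ σ := by
      funext x; funext j
      have h2 := MeasurableEquiv.piCongrLeft_apply_apply σ.symm
        (β := fun _ : Fin n => ℝ) x (σ j)
      simpa using h2
    rw [← hfun]
    exact (MeasurableEquiv.piCongrLeft (fun _ : Fin n => ℝ) σ.symm).measurableEmbedding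
  have hpreA' : ∀ (σ : Equiv.Perm (Fin n)) (m : Fin n),
      (fun x : Fin n → ℝ => x ∘ σ) ⁻¹' (A' m) = A' (σ m) := by
    intro σ m
    ext x
    simp only [Set.mem_preimage, hA'def, Set.mem_setOf_eq, Function.comp]
    constructor
    · intro h j' hj'
      have hne : σ.symm j' ≠ m := fun hc => hj' (by rw [← hc, Equiv.apply_symm_apply])
      have := h (σ.symm j') hne
      simpa using this
    · intro h j hj
      exact h (σ j) (fun hc => hj (σ.injective hc))
  -- equality of the event measures
  have hπA'eq : ∀ k l : Fin n, π (A' k) = π (A' l) := by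
    intro k l
    have h1 := (hMP (Equiv.swap k l)).measure_preimage (hA'meas l).nullMeasurableSet
    rw [hpreA' (Equiv.swap k l) l, Equiv.swap_apply_right] at h1
    exact h1
  have hAeq : ∀ k, μ (A k) = μ (A i') := fun k => by
    rw [hμA, hμA, hπA'eq k i']
  -- ties are null
  have hties : ∀ j k : Fin n, j ≠ k → μ {ω | X j ω = X k ω} = 0 := by
    intro j k hjk
    have hind : IndepFun (X j) (X k) μ := hindep.indepFun hjk
    have hmap2 : μ.map (fun ω => (X j ω, X k ω)) = D.prod D := by
      have h := (indepFun_iff_map_prod_eq_prod_map_map (hmeas j).aemeasurable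
        (hmeas k).aemeasurable).mp hind
      rw [hdist j, hdist k] at h
      exact h
    have hdiag : MeasurableSet {p : ℝ × ℝ | p.1 = p.2} :=
      measurableSet_eq_fun measurable_fst measurable_snd
    have hset : {ω | X j ω = X k ω}
        = (fun ω => (X j ω, X k ω)) ⁻¹' {p : ℝ × ℝ | p.1 = p.2} := rfl
    rw [hset, ← Measure.map_apply ((hmeas j).prodMk (hmeas k)) hdiag, hmap2,
      Measure.prod_apply hdiag]
    have : ∀ x : ℝ, D (Prod.mk x ⁻¹' {p : ℝ × ℝ | p.1 = p.2}) = 0 := by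
      intro x
      have : Prod.mk x ⁻¹' {p : ℝ × ℝ | p.1 = p.2} = {x} := by
        ext y; simp [eq_comm]
      rw [this]; exact hnonatomic x
    simp [this, hnonatomic]
  -- the events cover almost everything
  have hcover : μ (⋃ k, A k)ᶜ = 0 := by
    have hsub : (⋃ k, A k)ᶜ ⊆ ⋃ (j : Fin n) (k : Fin n) (_ : j ≠ k), {ω | X j ω = X k ω} := by
      intro ω hω
      simp only [Set.mem_compl_iff, Set.mem_iUnion, not_exists] at hω
      obtain ⟨k, -, hk⟩ := Finset.exists_max_image Finset.univ (fun j => X j ω)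
        ⟨i, Finset.mem_univ i⟩
      have hωk : ω ∉ A k := hω k
      simp only [hAdef, Set.mem_setOf_eq, not_forall] at hωk
      obtain ⟨j, hj, hnlt⟩ := hωk
      have hle : X j ω ≤ X k ω := hk j (Finset.mem_univ j)
      have heq : X j ω = X k ω := le_antisymm hle (not_lt.mp hnlt)
      simp only [Set.mem_iUnion]
      exact ⟨j, k, hj, heq⟩
    refine measure_mono_null hsub ?_
    exact measure_iUnion_null fun j => measure_iUnion_null fun k =>
      measure_iUnion_null fun hjk => hties j k hjk
  have hApos : μ (A i') ≠ 0 := by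
    intro h0
    have hone : μ (⋃ k, A k) = 1 := by
      have h1 := measure_add_measure_compl (MeasurableSet.iUnion hAmeas) (μ := μ)
      rw [hcover, add_zero] at h1
      simpa using h1
    have hle : (1 : ENNReal) ≤ ∑ k : Fin n, μ (A k) := by
      rw [← hone]
      exact measure_iUnion_fintype_le μ A
    rw [Finset.sum_congr rfl (fun k _ => (hAeq k).trans h0)] at hle
    simp at hle
  -- integrability
  have hbd : ∀ k : Fin n, ∀ᵐ ω ∂μ, X k ω ∈ Set.Icc (0 : ℝ) 1 := by
    intro k
    have h0 : μ (X k ⁻¹' (Set.Icc (0 : ℝ) 1)ᶜ) = 0 := by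
      rw [← Measure.map_apply (hmeas k) measurableSet_Icc.compl, hdist k,
        measure_compl measurableSet_Icc (measure_ne_top _ _), hsupp]
      simp
    rw [ae_iff]
    exact h0
  have hint : ∀ k, Integrable (X k) μ := by
    intro k
    refine Integrable.mono' (integrable_const 1) (hmeas k).aestronglyMeasurable ?_
    filter_upwards [hbd k] with ω hω
    rw [Real.norm_eq_abs, abs_le]
    exact ⟨by linarith [hω.1], hω.2⟩
  -- transfer the set integrals to π
  have hSI : ∀ k : Fin n, ∫ ω in A k, X k ω ∂μ = ∫ x in A' k, x k ∂π := by
    intro k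
    rw [← hmap, setIntegral_map (hA'meas k)
      ((measurable_pi_apply k).aestronglyMeasurable) hJmeas.aemeasurable]
    rfl
  -- exchangeability of the main quantity
  have hEq : ∫ ω in A i, X i ω ∂μ = ∫ ω in A i', X i' ω ∂μ := by
    rw [hSI i, hSI i']
    set σ : Equiv.Perm (Fin n) := Equiv.swap i i' with hσdef
    have hcomp := (hMP σ).integral_comp (hEmb σ)
      ((A' i).indicator (fun y => y i))
    have hptw : ∀ x : Fin n → ℝ,
        (A' i).indicator (fun y => y i) (x ∘ σ) = (A' i').indicator (fun y => y i') x := by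
      intro x
      have hmem : (x ∘ σ ∈ A' i) ↔ (x ∈ A' i') := by
        have := hpreA' σ i
        rw [Equiv.swap_apply_left] at this
        constructor
        · intro h; rw [← this]; exact h
        · intro h; rw [← this] at h; exact h
      by_cases hx : x ∈ A' i'
      · rw [Set.indicator_of_mem (hmem.mpr hx), Set.indicator_of_mem hx]
        simp [hσdef, Equiv.swap_apply_left]
      · rw [Set.indicator_of_notMem (fun hc => hx (hmem.mp hc)),
          Set.indicator_of_notMem hx]
    rw [← integral_indicator (hA'meas i), ← integral_indicator (hA'meas i'),
      ← hcomp]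
    exact integral_congr_ae (Filter.Eventually.of_forall hptw)
  -- strict inequality on A i'
  have hlt : ∫ ω in A i', X i ω ∂μ < ∫ ω in A i', X i' ω ∂μ := by
    have hIi : IntegrableOn (X i) (A i') μ := (hint i).integrableOn
    have hIi' : IntegrableOn (X i') (A i') μ := (hint i').integrableOn
    have hsubint : IntegrableOn (fun ω => X i' ω - X i ω) (A i') μ := hIi'.sub hIi
    have hnn : 0 ≤ᵐ[μ.restrict (A i')] fun ω => X i' ω - X i ω := by
      refine (ae_restrict_iff' (hAmeas i')).mpr (Filter.Eventually.of_forall ?_)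
      intro ω hω
      exact sub_nonneg.mpr (le_of_lt (hω i hii'))
    have hpos : 0 < ∫ ω in A i', (X i' ω - X i ω) ∂μ := by
      rw [setIntegral_pos_iff_support_of_nonneg_ae hnn hsubint]
      refine lt_of_lt_of_le (lt_of_le_of_ne zero_le (Ne.symm hApos)) (measure_mono ?_)
      intro ω hω
      exact ⟨ne_of_gt (sub_pos.mpr (hω i hii')), hω⟩
    have hsplit : ∫ ω in A i', (X i' ω - X i ω) ∂μ
        = (∫ ω in A i', X i' ω ∂μ) - ∫ ω in A i', X i ω ∂μ :=
      integral_sub hIi' hIi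
    linarith [hsplit ▸ hpos]
  -- assemble
  show (∫ ω, X i ω ∂(μ[|A i])) > (∫ ω, X i ω ∂(μ[|A i']))
  unfold ProbabilityTheory.cond
  rw [integral_smul_measure, integral_smul_measure]
  have hAi : μ (A i) = μ (A i') := hAeq i
  rw [hAi]
  have hcoef : 0 < ((μ (A i'))⁻¹).toReal := by
    refine ENNReal.toReal_pos ?_ ?_
    · exact ENNReal.inv_ne_zero.mpr (measure_ne_top _ _)
    · exact ENNReal.inv_ne_top.mpr hApos
  have hfinal : ∫ ω in A i', X i ω ∂μ < ∫ ω in A i, X i ω ∂μ := by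
    rw [hEq]; exact hlt
  exact smul_lt_smul_of_pos_left hfinal hcoef
end
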